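/- The Zeroing Algorithm terminates (i.e., there exists t ≥ 0 such that every coefficient of Q_t is ≤ 0) if and only if Q_0(r) < 0. -/

import Mathlib

open Polynomial

lemma zeroing_aux_gcd_pair (S : Finset ℕ) :
    ∃ a ∈ AddSubmonoid.closure (S : Set ℕ), a + S.gcd id ∈ AddSubmonoid.closure (S : Set ℕ) := by
  classical
  induction S using Finset.induction_on with
  | empty =>
    exact ⟨0, AddSubmonoid.zero_mem _, by simp [AddSubmonoid.zero_mem]⟩
  | @insert n S hn ih =>
    obtain ⟨a, haT, hagT⟩ := ih
    have hsub : (S : Set ℕ) ⊆ ((insert n S : Finset ℕ) : Set ℕ) := by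
      intro x hx; simp only [Finset.coe_insert, Set.mem_insert_iff]; exact Or.inr hx
    have hmono := AddSubmonoid.closure_mono hsub
    have haT' : a ∈ AddSubmonoid.closure ((insert n S : Finset ℕ) : Set ℕ) := hmono haT
    have hagT' : a + S.gcd id ∈ AddSubmonoid.closure ((insert n S : Finset ℕ) : Set ℕ) := hmono hagT
    have hnT : n ∈ AddSubmonoid.closure ((insert n S : Finset ℕ) : Set ℕ) := by
      apply AddSubmonoid.subset_closure; simp
    rw [Finset.gcd_insert]
    set g := S.gcd id with hg
    set h := Nat.gcd n g with hh
    have hgcd_id : GCDMonoid.gcd (id n) g = h := rfl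
    rcases Nat.eq_zero_or_pos g with hg0 | hgpos
    · refine ⟨0, AddSubmonoid.zero_mem _, ?_⟩
      rw [hgcd_id, hh, hg0]
      simpa [Nat.gcd_zero_right] using hnT
    · rcases eq_or_lt_of_le (Nat.gcd_le_right (m := n) hgpos) with hEq | hlt
      · refine ⟨a, haT', ?_⟩
        rw [hgcd_id, hh, hEq]; exact hagT'
      · have hgZ : (0:ℤ) < (g:ℤ) := by exact_mod_cast hgpos
        set A : ℤ := Nat.gcdA n g with hA
        set B : ℤ := Nat.gcdB n g with hB
        have hbez : (h : ℤ) = n * A + g * B := Nat.gcd_eq_gcd_ab n g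
        set A₁ : ℤ := A % g with hA₁
        have hA₁nonneg : 0 ≤ A₁ := Int.emod_nonneg A (by omega)
        set C : ℤ := -(↑n * (A / ↑g)) - B with hC
        have hA' : A₁ = A - g * (A / g) := Int.emod_def A g
        have hkey : (n:ℤ) * A₁ = h + g * C := by
          rw [hA', hC]; linear_combination -hbez
        have hCnonneg : 0 ≤ C := by
          have h1 : 0 ≤ (n:ℤ) * A₁ := mul_nonneg (by positivity) hA₁nonneg
          have h2 : (h:ℤ) < g := by exact_mod_cast hlt
          nlinarith
        set A₂ := A₁.toNat with hA₂
        set C₂ := C.toNat with hC₂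
        have hkeyN : n * A₂ = h + g * C₂ := by
          have e1 : (A₂ : ℤ) = A₁ := Int.toNat_of_nonneg hA₁nonneg
          have e2 : (C₂ : ℤ) = C := Int.toNat_of_nonneg hCnonneg
          have := hkey
          rw [← e1, ← e2] at this
          exact_mod_cast this
        refine ⟨C₂ * (a + g), ?_, ?_⟩
        · have := AddSubmonoid.nsmul_mem _ hagT' C₂
          simpa [smul_eq_mul] using this
        · rw [hgcd_id]
          have heq : C₂ * (a + g) + h = C₂ * a + A₂ * n := by
            have : A₂ * n = h + g * C₂ := by rw [mul_comm]; exact hkeyN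
            nlinarith [this]
          rw [heq]
          exact AddSubmonoid.add_mem _
            (by simpa [smul_eq_mul] using AddSubmonoid.nsmul_mem _ haT' C₂)
            (by simpa [smul_eq_mul] using AddSubmonoid.nsmul_mem _ hnT A₂)

lemma zeroing_aux_semigroup (S : Finset ℕ) (hg : S.gcd id = 1) :
    ∃ F : ℕ, ∀ d, F ≤ d → ∃ l : List ℕ, (∀ m ∈ l, m ∈ S) ∧ l.sum = d := by
  obtain ⟨a, haT, ha1T⟩ := zeroing_aux_gcd_pair S
  rw [hg] at ha1T
  refine ⟨a * a, fun d hd => ?_⟩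
  have hmem : d ∈ AddSubmonoid.closure (S : Set ℕ) := by
    rcases Nat.eq_zero_or_pos a with ha0 | hapos
    · -- a = 0, so 1 ∈ closure
      have h1 : (1:ℕ) ∈ AddSubmonoid.closure (S : Set ℕ) := by simpa [ha0] using ha1T
      have := AddSubmonoid.nsmul_mem _ h1 d
      simpa [smul_eq_mul] using this
    · set q := d / a with hq
      set rr := d % a with hrr
      have h0 : a * q + rr = d := Nat.div_add_mod d a
      have hdqr : d = q * a + rr := by rw [← h0]; ring
      have hrlt : rr < a := Nat.mod_lt d hapos
      have hqge : rr ≤ q := by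
        have : a ≤ q := (Nat.le_div_iff_mul_le hapos).mpr (by nlinarith)
        omega
      obtain ⟨q', hq'⟩ : ∃ q', q = q' + rr := ⟨q - rr, by omega⟩
      have hsplit : d = rr * (a + 1) + q' * a := by rw [hdqr, hq']; ring
      rw [hsplit]
      exact AddSubmonoid.add_mem _
        (by simpa [smul_eq_mul] using AddSubmonoid.nsmul_mem _ ha1T rr)
        (by simpa [smul_eq_mul] using AddSubmonoid.nsmul_mem _ haT q')
  exact AddSubmonoid.exists_list_of_mem_closure hmem

lemma zeroing_aux_len_le_sum : ∀ (l : List ℕ), (∀ m ∈ l, 1 ≤ m) → l.length ≤ l.sum := by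
  intro l
  induction l with
  | nil => simp
  | cons m l ih =>
    intro h
    have h1 := h m List.mem_cons_self
    have h2 := ih (fun x hx => h x (List.mem_cons_of_mem _ hx))
    simp only [List.length_cons, List.sum_cons]
    omega

set_option maxHeartbeats 1600000

/-- The Zeroing Algorithm terminates (there exists `t` such that every coefficient of
`Q_t` is `≤ 0`) if and only if `Q_0(r) < 0`. -/
theorem zeroing_algorithm_termination
    (k : ℕ) (hk : 1 ≤ k) (c : ℕ → ℕ) (hck : 0 < c k)
    (hgcd : Finset.gcd ((Finset.Icc 1 k).filter fun m => c m ≠ 0) id = 1)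
    (P : Polynomial ℝ)
    (hP : P = X ^ k - ∑ i ∈ Finset.Icc 1 k, C (c i : ℝ) * X ^ (k - i))
    (r : ℝ) (hr : 0 < r) (hroot : P.IsRoot r)
    (β : ℕ → ℝ) (hβ : ∃ n ∈ Finset.Icc 1 k, β n ≠ 0)
    (Q : ℕ → Polynomial ℝ)
    (hQ0 : Q 0 = ∑ n ∈ Finset.Icc 1 k, C (β n) * X ^ (k - n))
    (hQt : ∀ t, 1 ≤ t → Q t = X * Q (t - 1) - C ((Q (t - 1)).coeff (k - 1)) * P) :
    (∃ t : ℕ, ∀ j : ℕ, (Q t).coeff j ≤ 0) ↔ (Q 0).eval r < 0 := by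
  have rne : r ≠ 0 := ne_of_gt hr
  -- coefficients of sums of the given shape
  have hsum : ∀ (f : ℕ → ℝ) (j : ℕ),
      (∑ i ∈ Finset.Icc 1 k, C (f i) * X ^ (k - i)).coeff j
        = if j < k then f (k - j) else 0 := by
    intro f j
    rw [Polynomial.finset_sum_coeff]
    by_cases hj : j < k
    · rw [Finset.sum_eq_single (k - j)]
      · simp only [coeff_C_mul, coeff_X_pow]
        rw [if_pos (by omega), if_pos hj]
        simp
      · intro b hb hbne
        simp only [coeff_C_mul, coeff_X_pow]
        rw [if_neg (by simp only [Finset.mem_Icc] at hb; omega)]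
        simp
      · intro hnot
        exact absurd (Finset.mem_Icc.mpr (by omega)) hnot
    · rw [if_neg hj]
      apply Finset.sum_eq_zero
      intro i hi
      simp only [Finset.mem_Icc] at hi
      simp only [coeff_C_mul, coeff_X_pow]
      rw [if_neg (by omega)]
      simp
  have hPcoeff : ∀ j, P.coeff j
      = (if j = k then (1:ℝ) else 0) - (if j < k then (c (k - j) : ℝ) else 0) := by
    intro j
    rw [hP, Polynomial.coeff_sub, Polynomial.coeff_X_pow, hsum]
  have hQ0coeff : ∀ j, (Q 0).coeff j = if j < k then β (k - j) else 0 := by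
    intro j; rw [hQ0, hsum]
  set s : ℕ → ℝ := fun t => (Q t).coeff (k - 1) with hs
  have hrec : ∀ t, Q (t + 1) = X * Q t - C (s t) * P := by
    intro t
    have := hQt (t + 1) (by omega)
    simpa using this
  have hstep : ∀ t j, (Q (t + 1)).coeff (j + 1)
      = (Q t).coeff j - s t * P.coeff (j + 1) := by
    intro t j
    rw [hrec t, Polynomial.coeff_sub, Polynomial.coeff_X_mul, Polynomial.coeff_C_mul]
  have hstep0 : ∀ t, (Q (t + 1)).coeff 0 = - (s t * P.coeff 0) := by
    intro t
    rw [hrec t, Polynomial.coeff_sub, Polynomial.mul_coeff_zero, Polynomial.coeff_X_zero,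
      Polynomial.coeff_C_mul]
    ring
  have hvanish : ∀ t j, k ≤ j → (Q t).coeff j = 0 := by
    intro t
    induction t with
    | zero => intro j hj; rw [hQ0coeff]; rw [if_neg (by omega)]
    | succ t ih =>
      intro j hj
      obtain ⟨j', rfl⟩ : ∃ j', j = j' + 1 := ⟨j - 1, by omega⟩
      rw [hstep, hPcoeff]
      by_cases hjk : j' + 1 = k
      · rw [if_pos hjk, if_neg (by omega)]
        have : (Q t).coeff j' = s t := by
          rw [hs]; congr 1; omega
        rw [this]; ring
      · rw [if_neg hjk, if_neg (by omega), ih j' (by omega)]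
        ring
  have hndeg : ∀ t, (Q t).natDegree < k := by
    intro t
    have : (Q t).natDegree ≤ k - 1 :=
      Polynomial.natDegree_le_iff_coeff_eq_zero.mpr fun N hN => hvanish t N (by omega)
    omega
  have heval : ∀ t (x : ℝ), (Q t).eval x = ∑ j ∈ Finset.range k, (Q t).coeff j * x ^ j :=
    fun t x => Polynomial.eval_eq_sum_range' (hndeg t) x
  have hE : ∀ t, (Q t).eval r = r ^ t * (Q 0).eval r := by
    intro t
    induction t with
    | zero => simp
    | succ t ih =>
      rw [hrec t, Polynomial.eval_sub, Polynomial.eval_mul, Polynomial.eval_mul,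
        Polynomial.eval_X, Polynomial.eval_C, hroot, mul_zero, sub_zero, ih, pow_succ]
      ring
  have hU : ∀ j, j < k → ∀ v, (Q (v + j + 1)).coeff j
      = ∑ i ∈ Finset.range (j + 1), (c (k - j + i) : ℝ) * s (v + j - i) := by
    intro j
    induction j with
    | zero =>
      intro _ v
      rw [Finset.sum_range_one, hstep0, hPcoeff]
      rw [if_neg (show ¬(0 = k) by omega), if_pos (show 0 < k by omega)]
      simp only [Nat.sub_zero, Nat.add_zero]
      ring
    | succ j ih =>
      intro hjk v
      rw [show v + (j+1) + 1 = (v + j + 1) + 1 by omega, hstep, hPcoeff,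
        if_neg (show ¬(j + 1 = k) by omega), if_pos (show j + 1 < k by omega),
        ih (by omega) v]
      rw [Finset.sum_range_succ' (fun i => (c (k - (j+1) + i) : ℝ) * s (v + (j+1) - i)) (j+1)]
      have e3 : (c (k - (j+1) + 0) : ℝ) * s (v + (j+1) - 0)
          = (c (k - (j+1)) : ℝ) * s (v + j + 1) := by
        have a1 : v + (j+1) - 0 = v + j + 1 := by omega
        have a2 : k - (j+1) + 0 = k - (j+1) := by omega
        rw [a1, a2]
      rw [e3]
      have e2 : ∀ i ∈ Finset.range (j + 1),
          (c (k - (j+1) + (i+1)) : ℝ) * s (v + (j+1) - (i+1))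
            = (c (k - j + i) : ℝ) * s (v + j - i) := by
        intro i hi
        simp only [Finset.mem_range] at hi
        have h1 : k - (j+1) + (i+1) = k - j + i := by omega
        have h2 : v + (j+1) - (i+1) = v + j - i := by omega
        rw [h1, h2]
      rw [Finset.sum_congr rfl e2]
      ring
  -- ===== normalized sequence and convexity machinery =====
  set σ : ℕ → ℝ := fun t => s t / r ^ t with hσ
  have hsr : ∀ t, s t = σ t * r ^ t := by
    intro t; rw [hσ]; field_simp
  set p : ℕ → ℝ := fun i => (c (i + 1) : ℝ) / r ^ (i + 1) with hp
  have hppos : ∀ i, 0 ≤ p i := fun i => div_nonneg (Nat.cast_nonneg _) (by positivity)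
  have hrk : r ^ k = ∑ i ∈ Finset.Icc 1 k, (c i : ℝ) * r ^ (k - i) := by
    have h0 := hroot
    rw [Polynomial.IsRoot, hP] at h0
    simp only [Polynomial.eval_sub, Polynomial.eval_pow, Polynomial.eval_X,
      Polynomial.eval_finset_sum, Polynomial.eval_mul, Polynomial.eval_C] at h0
    linarith
  have hpsum : ∑ i ∈ Finset.range k, p i = 1 := by
    have h2 : ∀ m ∈ Finset.Icc 1 k, (c m : ℝ) * r ^ (k - m) / r ^ k = (c m : ℝ) / r ^ m := by
      intro m hm
      simp only [Finset.mem_Icc] at hm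
      rw [div_eq_div_iff (by positivity) (by positivity), mul_assoc, ← pow_add,
        show k - m + m = k from by omega]
    have h3 : ∑ m ∈ Finset.Icc 1 k, (c m : ℝ) / r ^ m = 1 := by
      rw [← Finset.sum_congr rfl h2, ← Finset.sum_div, ← hrk, div_self (by positivity)]
    calc ∑ i ∈ Finset.range k, p i
        = ∑ m ∈ Finset.Icc 1 k, (c m : ℝ) / r ^ m := by
          rw [← Finset.Ico_add_one_right_eq_Icc, Finset.sum_Ico_eq_sum_range]
          simp only [Nat.succ_sub_one, Nat.add_sub_cancel]
          apply Finset.sum_congr rfl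
          intro i _
          rw [hp]
          simp only
          rw [show 1 + i = i + 1 from by omega]
      _ = 1 := h3
  have hsrecS : ∀ u, s (u + k) = ∑ i ∈ Finset.range k, (c (1 + i) : ℝ) * s (u + (k-1) - i) := by
    intro u
    have h0 := hU (k - 1) (by omega) u
    rw [show u + (k - 1) + 1 = u + k from by omega, show k - 1 + 1 = k from by omega] at h0
    rw [show s (u + k) = (Q (u + k)).coeff (k - 1) from rfl, h0]
    apply Finset.sum_congr rfl
    intro i _
    rw [show k - (k - 1) + i = 1 + i from by omega]
  have hσrec : ∀ u, σ (u + k) = ∑ i ∈ Finset.range k, p i * σ (u + (k-1) - i) := by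
    intro u
    have h1 : σ (u + k) = (∑ i ∈ Finset.range k, (c (1 + i) : ℝ) * s (u + (k-1) - i)) / r ^ (u + k) := by
      rw [hσ]; simp only; rw [hsrecS u]
    rw [h1, Finset.sum_div]
    apply Finset.sum_congr rfl
    intro i hi
    simp only [Finset.mem_range] at hi
    rw [hp, hσ]
    simp only
    rw [div_mul_div_comm, ← pow_add, show i + 1 + (u + (k-1) - i) = u + k from by omega,
      show 1 + i = i + 1 from by omega]
  have hPROP : ∀ (f : ℕ → ℝ), (∀ u, f (u + k) = ∑ i ∈ Finset.range k, p i * f (u + (k-1) - i)) →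
      ∀ (w : ℕ) (M : ℝ), (∀ x, w ≤ x → x < w + k → f x ≤ M) → ∀ v, w ≤ v → f v ≤ M := by
    intro f hf w M hwin v
    induction v using Nat.strong_induction_on with
    | _ v ih =>
      intro hv
      by_cases hcase : v < w + k
      · exact hwin v hv hcase
      · push_neg at hcase
        obtain ⟨u, rfl⟩ : ∃ u, v = u + k := ⟨v - k, by omega⟩
        rw [hf u]
        calc ∑ i ∈ Finset.range k, p i * f (u + (k-1) - i)
            ≤ ∑ i ∈ Finset.range k, p i * M := by
              apply Finset.sum_le_sum
              intro i hi
              simp only [Finset.mem_range] at hi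
              exact mul_le_mul_of_nonneg_left (ih (u + (k-1) - i) (by omega) (by omega)) (hppos i)
          _ = M := by rw [← Finset.sum_mul, hpsum, one_mul]
  have hne_rk : (Finset.range k).Nonempty := ⟨0, Finset.mem_range.mpr (by omega)⟩
  set M0 := (Finset.range k).sup' hne_rk σ with hM0
  have hM0glob : ∀ v, σ v ≤ M0 :=
    fun v => hPROP σ hσrec 0 M0
      (fun x _ hxk => Finset.le_sup' σ (Finset.mem_range.mpr (by omega))) v (Nat.zero_le v)
  set m0 := (Finset.range k).inf' hne_rk σ with hm0
  have hm0glob : ∀ v, m0 ≤ σ v := by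
    intro v
    have hrecneg : ∀ u, (fun t => -σ t) (u + k)
        = ∑ i ∈ Finset.range k, p i * (fun t => -σ t) (u + (k-1) - i) := by
      intro u
      simp only
      rw [hσrec u, ← Finset.sum_neg_distrib]
      apply Finset.sum_congr rfl
      intro i _; ring
    have := hPROP (fun t => -σ t) hrecneg 0 (-m0)
      (fun x _ hxk => by
        simp only [neg_le_neg_iff]
        exact Finset.inf'_le σ (Finset.mem_range.mpr (by omega))) v (Nat.zero_le v)
    linarith
  -- ===== the support set and the contraction constant =====
  set S' := (Finset.Icc 1 k).filter (fun m => c m ≠ 0) with hS'def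
  have hS'sub : ∀ m ∈ S', 1 ≤ m ∧ m ≤ k ∧ c m ≠ 0 := by
    intro m hm
    rw [hS'def, Finset.mem_filter, Finset.mem_Icc] at hm
    exact ⟨hm.1.1, hm.1.2, hm.2⟩
  have hkS' : k ∈ S' := by
    rw [hS'def, Finset.mem_filter, Finset.mem_Icc]
    exact ⟨⟨hk, le_rfl⟩, by omega⟩
  have hS'ne : S'.Nonempty := ⟨k, hkS'⟩
  set δ := S'.inf' hS'ne (fun m => (c m : ℝ) / r ^ m) with hδdef
  have hδpos : 0 < δ := by
    rw [hδdef, Finset.lt_inf'_iff]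
    intro m hm
    obtain ⟨h1, h2, h3⟩ := hS'sub m hm
    have : (0:ℝ) < (c m : ℝ) := by exact_mod_cast Nat.pos_of_ne_zero h3
    positivity
  have hδle_p : ∀ m ∈ S', δ ≤ p (m - 1) := by
    intro m hm
    obtain ⟨h1, _, _⟩ := hS'sub m hm
    have hle := Finset.inf'_le (fun m => (c m : ℝ) / r ^ m) hm
    rw [hp]
    simp only
    rw [show m - 1 + 1 = m from by omega]
    exact hle
  have hδ1 : δ ≤ 1 := by
    have h1 : δ ≤ p (k - 1) := hδle_p k hkS'
    have h2 : p (k - 1) ≤ ∑ i ∈ Finset.range k, p i :=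
      Finset.single_le_sum (fun i _ => hppos i) (Finset.mem_range.mpr (by omega))
    rw [hpsum] at h2
    linarith
  have hSTEP : ∀ (w0 : ℕ) (M : ℝ), (∀ x, w0 ≤ x → σ x ≤ M) →
      ∀ v m, w0 + k ≤ v → m ∈ S' → σ (v + m) ≤ M - δ * (M - σ v) := by
    intro w0 M hM v m hv hm
    obtain ⟨hm1, hmk, hmc⟩ := hS'sub m hm
    obtain ⟨u, hu⟩ : ∃ u, v + m = u + k := ⟨v + m - k, by omega⟩
    have hiv : u + (k-1) - (m - 1) = v := by omega
    have hi : m - 1 ∈ Finset.range k := Finset.mem_range.mpr (by omega)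
    have hσv : σ v ≤ M := hM v (by omega)
    have hsum1 : p (m-1) + ∑ i ∈ (Finset.range k).erase (m-1), p i = 1 := by
      rw [Finset.add_sum_erase _ _ hi, hpsum]
    have hbound : ∑ i ∈ (Finset.range k).erase (m-1), p i * σ (u + (k-1) - i)
        ≤ ∑ i ∈ (Finset.range k).erase (m-1), p i * M := by
      apply Finset.sum_le_sum
      intro i hii
      have hik : i ∈ Finset.range k := Finset.mem_of_mem_erase hii
      simp only [Finset.mem_range] at hik
      exact mul_le_mul_of_nonneg_left (hM (u + (k-1) - i) (by omega)) (hppos i)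
    have hδm : δ ≤ p (m - 1) := hδle_p m hm
    calc σ (v + m) = σ (u + k) := by rw [hu]
      _ = ∑ i ∈ Finset.range k, p i * σ (u + (k-1) - i) := hσrec u
      _ = p (m-1) * σ (u + (k-1) - (m-1))
            + ∑ i ∈ (Finset.range k).erase (m-1), p i * σ (u + (k-1) - i) :=
          (Finset.add_sum_erase _ (fun i => p i * σ (u + (k-1) - i)) hi).symm
      _ = p (m-1) * σ v + ∑ i ∈ (Finset.range k).erase (m-1), p i * σ (u + (k-1) - i) := by
          rw [hiv]
      _ ≤ p (m-1) * σ v + (∑ i ∈ (Finset.range k).erase (m-1), p i) * M := by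
          rw [Finset.sum_mul]
          linarith [hbound]
      _ = M - p (m-1) * (M - σ v) := by linear_combination M * hsum1
      _ ≤ M - δ * (M - σ v) := by nlinarith [hδm, hσv]
  have hLIST : ∀ (w0 : ℕ) (M : ℝ), (∀ x, w0 ≤ x → σ x ≤ M) →
      ∀ (l : List ℕ), (∀ m ∈ l, m ∈ S') → ∀ v, w0 + k ≤ v →
      σ (v + l.sum) ≤ M - δ ^ l.length * (M - σ v) := by
    intro w0 M hM l
    induction l with
    | nil =>
      intro _ v hv
      simp
    | cons m l ih =>
      intro hml v hv
      have hm := hml m List.mem_cons_self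
      have hstep1 := hSTEP w0 M hM v m hv hm
      have hσv : σ v ≤ M := hM v (by omega)
      have hσvm : σ (v + m) ≤ M := by nlinarith [hδpos, hδ1]
      have hihl := ih (fun x hx => hml x (List.mem_cons_of_mem _ hx)) (v + m) (by omega)
      have hassoc : v + (m :: l).sum = (v + m) + l.sum := by
        rw [List.sum_cons]; omega
      rw [hassoc]
      have hδl : (0:ℝ) ≤ δ ^ l.length := by positivity
      have h2 : δ * (M - σ v) ≤ M - σ (v + m) := by linarith
      have h3 : δ ^ l.length * (δ * (M - σ v)) ≤ δ ^ l.length * (M - σ (v + m)) :=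
        mul_le_mul_of_nonneg_left h2 hδl
      have hlen : ((m :: l).length : ℕ) = l.length + 1 := by simp
      calc σ ((v + m) + l.sum) ≤ M - δ ^ l.length * (M - σ (v + m)) := hihl
        _ ≤ M - δ ^ (m :: l).length * (M - σ v) := by
            rw [hlen, pow_succ]
            nlinarith [h3]
  -- ===== window identity and window minimum =====
  set W : ℝ := ∑ j ∈ Finset.range k, ∑ i ∈ Finset.range (j+1),
      (c (k - j + i) : ℝ) * r ^ j / r ^ (1 + i) with hW
  have hWterm_nonneg : ∀ j i, (0:ℝ) ≤ (c (k - j + i) : ℝ) * r ^ j / r ^ (1 + i) := by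
    intro j i; positivity
  have hWpos : 0 < W := by
    rw [hW]
    apply Finset.sum_pos' (fun j _ => Finset.sum_nonneg fun i _ => hWterm_nonneg j i)
    refine ⟨k - 1, Finset.mem_range.mpr (by omega), ?_⟩
    apply Finset.sum_pos' (fun i _ => hWterm_nonneg _ i)
    refine ⟨k - 1, Finset.mem_range.mpr (by omega), ?_⟩
    rw [show k - (k-1) + (k-1) = k from by omega]
    have hc : (0:ℝ) < (c k : ℝ) := by exact_mod_cast hck
    positivity
  have hWID : ∀ u, (Q 0).eval r = ∑ j ∈ Finset.range k, ∑ i ∈ Finset.range (j+1),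
      (c (k - j + i) : ℝ) * r ^ j / r ^ (1 + i) * σ (u + (k-1) - i) := by
    intro u
    have h1 : (Q (u + k)).eval r = r ^ (u+k) * (Q 0).eval r := hE (u+k)
    have h2 : (Q (u + k)).eval r = ∑ j ∈ Finset.range k, (Q (u+k)).coeff j * r ^ j := heval _ r
    have h3 : ∀ j, j < k → (Q (u+k)).coeff j
        = ∑ i ∈ Finset.range (j+1), (c (k - j + i) : ℝ) * s (u + (k-1) - i) := by
      intro j hj
      have h0 := hU j hj (u + (k - 1 - j))
      rw [show u + (k - 1 - j) + j + 1 = u + k from by omega] at h0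
      rw [h0]
      apply Finset.sum_congr rfl
      intro i hi
      simp only [Finset.mem_range] at hi
      rw [show u + (k - 1 - j) + j - i = u + (k-1) - i from by omega]
    have h4 : (Q 0).eval r = (∑ j ∈ Finset.range k, (Q (u+k)).coeff j * r ^ j) / r ^ (u+k) := by
      rw [← h2, h1]
      field_simp
    rw [h4, Finset.sum_div]
    apply Finset.sum_congr rfl
    intro j hj
    simp only [Finset.mem_range] at hj
    rw [h3 j hj, Finset.sum_mul, Finset.sum_div]
    apply Finset.sum_congr rfl
    intro i hi
    simp only [Finset.mem_range] at hi
    rw [hsr (u + (k-1) - i)]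
    rw [show u + k = (1 + i) + (u + (k-1) - i) from by omega, pow_add]
    have hr1 : r ^ (1 + i) ≠ 0 := by positivity
    have hr2 : r ^ (u + (k-1) - i) ≠ 0 := by positivity
    field_simp
  set L0 := (Q 0).eval r / W with hL0def
  have hWIN : ∀ u, ∃ x, u ≤ x ∧ x ≤ u + (k-1) ∧ σ x ≤ L0 := by
    intro u
    by_contra hcon
    push_neg at hcon
    have hwne : (Finset.Icc u (u + (k-1))).Nonempty := ⟨u, Finset.mem_Icc.mpr (by omega)⟩
    set L := (Finset.Icc u (u + (k-1))).inf' hwne σ with hL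
    have hLgt : L0 < L := by
      rw [hL, Finset.lt_inf'_iff]
      intro x hx
      rw [Finset.mem_Icc] at hx
      exact hcon x hx.1 hx.2
    have hLle : ∀ x, u ≤ x → x ≤ u + (k-1) → L ≤ σ x := fun x h1 h2 =>
      Finset.inf'_le σ (Finset.mem_Icc.mpr ⟨h1, h2⟩)
    have h5 : W * L ≤ (Q 0).eval r := by
      rw [hWID u, hW, Finset.sum_mul]
      apply Finset.sum_le_sum
      intro j hj
      rw [Finset.sum_mul]
      apply Finset.sum_le_sum
      intro i hi
      simp only [Finset.mem_range] at hj hi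
      exact mul_le_mul_of_nonneg_left (hLle _ (by omega) (by omega)) (hWterm_nonneg _ _)
    have h6 : (Q 0).eval r = W * L0 := by
      rw [hL0def]
      field_simp
    nlinarith [hWpos]
  constructor
  · -- termination implies Q_0(r) < 0
    rintro ⟨t, ht⟩
    have hevneg : (Q t).eval r ≤ 0 := by
      rw [heval t r]
      apply Finset.sum_nonpos
      intro j _
      exact mul_nonpos_of_nonpos_of_nonneg (ht j) (by positivity)
    have hle : (Q 0).eval r ≤ 0 := by
      have h0 := hE t
      nlinarith [pow_pos hr t]
    rcases lt_or_eq_of_le hle with h | h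
    · exact h
    · exfalso
      have hQt0 : (Q t).eval r = 0 := by rw [hE t, h, mul_zero]
      have hterms : ∀ j ∈ Finset.range k, (Q t).coeff j * r ^ j = 0 := by
        rw [heval t r] at hQt0
        exact (Finset.sum_eq_zero_iff_of_nonpos
          (fun j _ => mul_nonpos_of_nonpos_of_nonneg (ht j) (by positivity))).mp hQt0
      have hcoeff0 : ∀ j, (Q t).coeff j = 0 := by
        intro j
        by_cases hjk : j < k
        · have h1 := hterms j (Finset.mem_range.mpr hjk)
          have hrj : (0:ℝ) < r ^ j := pow_pos hr j
          rcases mul_eq_zero.mp h1 with h2 | h2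
          · exact h2
          · exact absurd h2 (ne_of_gt hrj)
        · exact hvanish t j (by omega)
      have hQteq : Q t = 0 := Polynomial.ext fun j => by
        rw [hcoeff0 j, Polynomial.coeff_zero]
      have hP0 : P.eval 0 = -(c k : ℝ) := by
        rw [← Polynomial.coeff_zero_eq_eval_zero, hPcoeff 0,
          if_neg (by omega), if_pos (by omega)]
        norm_num
      have hback : ∀ u, Q u = 0 → Q 0 = 0 := by
        intro u
        induction u with
        | zero => exact id
        | succ u ih =>
          intro h0
          have h1 := hrec u
          rw [h0] at h1
          have h2 := congrArg (Polynomial.eval 0) h1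
          simp only [Polynomial.eval_zero, Polynomial.eval_sub, Polynomial.eval_mul,
            Polynomial.eval_X, Polynomial.eval_C, hP0, zero_mul] at h2
          have hs0 : s u = 0 := by
            have hck' : (0:ℝ) < (c k : ℝ) := by exact_mod_cast hck
            nlinarith [h2]
          rw [hs0] at h1
          simp only [Polynomial.C_0, zero_mul, sub_zero] at h1
          have h3 : Q u = 0 := by
            rcases mul_eq_zero.mp h1.symm with h4 | h4
            · exact absurd h4 Polynomial.X_ne_zero
            · exact h4
          exact ih h3
      have hQ00 : Q 0 = 0 := hback t hQteq
      obtain ⟨n, hn, hbn⟩ := hβ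
      rw [Finset.mem_Icc] at hn
      have h7 : (Q 0).coeff (k - n) = β n := by
        rw [hQ0coeff, if_pos (by omega), show k - (k - n) = n from by omega]
      rw [hQ00, Polynomial.coeff_zero] at h7
      exact hbn h7.symm
  · -- Q_0(r) < 0 implies termination
    intro hneg
    have hL0neg : L0 < 0 := by
      rw [hL0def]
      exact div_neg_of_neg_of_pos hneg hWpos
    have hgcd' : S'.gcd id = 1 := hgcd
    obtain ⟨F, hF⟩ := zeroing_aux_semigroup S' hgcd'
    set B := F + 3 * k with hB
    set ε := δ ^ B * (-L0) with hε
    have hδBpos : (0:ℝ) < δ ^ B := pow_pos hδpos B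
    have hεpos : 0 < ε := mul_pos hδBpos (by linarith)
    have hDESC : ∀ (t0 : ℕ) (M : ℝ), 0 ≤ M → (∀ x, t0 ≤ x → σ x ≤ M) →
        ∀ x, t0 + F + 3 * k ≤ x → σ x ≤ M - ε := by
      intro t0 M hMnn hM
      obtain ⟨u, hu1, hu2, hu3⟩ := hWIN (t0 + k)
      have hwindow : ∀ x, u + F + k ≤ x → x < u + F + k + k → σ x ≤ M - ε := by
        intro x hx1 hx2
        have hdF : F ≤ x - u := by omega
        obtain ⟨l, hl1, hl2⟩ := hF (x - u) hdF
        have hlsum1 : ∀ m ∈ l, 1 ≤ m := fun m hm => (hS'sub m (hl1 m hm)).1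
        have hlen : l.length ≤ B := by
          have h1 : l.length ≤ l.sum := zeroing_aux_len_le_sum l hlsum1
          omega
        have hx : x = u + l.sum := by omega
        have h2 := hLIST t0 M hM l hl1 u (by omega)
        have h3 : δ ^ B ≤ δ ^ l.length := pow_le_pow_of_le_one (le_of_lt hδpos) hδ1 hlen
        have h4 : (0:ℝ) < δ ^ l.length := pow_pos hδpos _
        calc σ x = σ (u + l.sum) := by rw [hx]
          _ ≤ M - δ ^ l.length * (M - σ u) := h2
          _ ≤ M - ε := by rw [hε]; nlinarith [hu3, hL0neg, hMnn]
      intro x hx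
      exact hPROP σ hσrec (u + F + k) (M - ε) hwindow x (by omega)
    have hITER : ∀ j : ℕ, (∃ t1, ∀ x, t1 ≤ x → σ x < 0)
        ∨ (∃ t1, ∀ x, t1 ≤ x → σ x ≤ M0 - j * ε) := by
      intro j
      induction j with
      | zero => exact Or.inr ⟨0, fun x _ => by simpa using hM0glob x⟩
      | succ j ih =>
        rcases ih with h | ⟨t1, h⟩
        · exact Or.inl h
        · by_cases hM : M0 - j * ε < 0
          · exact Or.inl ⟨t1, fun x hx => lt_of_le_of_lt (h x hx) hM⟩
          · push_neg at hM
            refine Or.inr ⟨t1 + F + 3 * k, fun x hx => ?_⟩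
            have h5 := hDESC t1 (M0 - j * ε) hM h x hx
            push_cast
            push_cast at h5
            linarith
    obtain ⟨j, hj⟩ := exists_nat_gt ((M0 - m0) / ε)
    rcases hITER j with ⟨t1, hnegσ⟩ | ⟨t1, hle⟩
    · refine ⟨t1 + k, fun j => ?_⟩
      by_cases hjk : j < k
      · have h0 := hU j hjk (t1 + (k - 1 - j))
        rw [show t1 + (k - 1 - j) + j + 1 = t1 + k from by omega] at h0
        rw [h0]
        apply Finset.sum_nonpos
        intro i hi
        simp only [Finset.mem_range] at hi
        have hσx : σ (t1 + (k - 1 - j) + j - i) < 0 := hnegσ _ (by omega)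
        have hsx : s (t1 + (k - 1 - j) + j - i) ≤ 0 := by
          rw [hsr]
          exact mul_nonpos_of_nonpos_of_nonneg (le_of_lt hσx) (by positivity)
        exact mul_nonpos_of_nonneg_of_nonpos (Nat.cast_nonneg _) hsx
      · rw [hvanish _ j (by omega)]
    · exfalso
      have h1 := hle t1 le_rfl
      have h2 := hm0glob t1
      have h3 : M0 - m0 < j * ε := by
        have := (div_lt_iff₀ hεpos).mp hj
        linarith
      linarith
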